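/- For every integer p ≥ 0 there exists an ordered graph (G, ≺) on 2^p + 1 vertices that is ordered along a Hamiltonian path, whose entire edge set is non-crossing, and which contains no induced path of size 2p + 3. -/

import Mathlib

/-- `(G, ≺)` (on `Fin n` with its natural order) is ordered along a Hamiltonian path:
consecutive vertices are adjacent. -/
def OrderedAlongHamPath {n : ℕ} (G : SimpleGraph (Fin n)) : Prop :=
  ∀ i : Fin n, ∀ h : (i : ℕ) + 1 < n, G.Adj i ⟨(i : ℕ) + 1, h⟩

/-- An induced path of size `s`: `s` distinct vertices, adjacent iff consecutive. -/
def IsInducedPath {n : ℕ} (G : SimpleGraph (Fin n)) {s : ℕ} (v : Fin s → Fin n) : Prop :=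
  Function.Injective v ∧
    ∀ i j : Fin s, G.Adj (v i) (v j) ↔ ((i : ℕ) + 1 = (j : ℕ) ∨ (j : ℕ) + 1 = (i : ℕ))

/-- An increasing induced path. -/
def IsIncreasingInducedPath {n : ℕ} (G : SimpleGraph (Fin n)) {s : ℕ} (v : Fin s → Fin n) : Prop :=
  StrictMono v ∧
    ∀ i j : Fin s, G.Adj (v i) (v j) ↔ ((i : ℕ) + 1 = (j : ℕ) ∨ (j : ℕ) + 1 = (i : ℕ))

/-- A set of edges is non-crossing. -/
def NonCrossing {n : ℕ} (F : Set (Sym2 (Fin n))) : Prop :=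
  ¬ ∃ a b c d : Fin n, a < c ∧ c < b ∧ b < d ∧ s(a, b) ∈ F ∧ s(c, d) ∈ F

/-- `(G, ≺)` is `k`-non-crossing: the edge set partitions into `k` non-crossing sets. -/
def KNonCrossing {n : ℕ} (G : SimpleGraph (Fin n)) (k : ℕ) : Prop :=
  ∃ E : Fin k → Set (Sym2 (Fin n)),
    (⋃ i, E i) = G.edgeSet ∧ (∀ i j, i ≠ j → Disjoint (E i) (E j)) ∧ ∀ i, NonCrossing (E i)

/-- An interval of the ordering. -/
def IsInterval {n : ℕ} (I : Set (Fin n)) : Prop :=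
  ∀ a ∈ I, ∀ b ∈ I, ∀ x : Fin n, a ≤ x → x ≤ b → x ∈ I

/-- The gap of `u` towards `I` is at least `g`. -/
def HasGapAtLeast {n : ℕ} (G : SimpleGraph (Fin n)) (u : Fin n) (I : Set (Fin n)) (g : ℕ) : Prop :=
  ∃ a b : Fin n, a ∈ I ∧ b ∈ I ∧ a ≤ b ∧ g ≤ (b : ℕ) - (a : ℕ) ∧
    ∀ x ∈ Set.Icc a b, ¬ G.Adj u x

/-- The edges of `F` crossing the cut just after position `t`. -/
def CutAt {n : ℕ} (F : Set (Sym2 (Fin n))) (t : Fin n) : Set (Sym2 (Fin n)) :=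
  {e | e ∈ F ∧ ∃ a b : Fin n, e = s(a, b) ∧ a ≤ t ∧ t < b}

/-- The set of edges `F` (on ordered vertex set `Fin n`) has cutwidth at most `c`. -/
def CutwidthLE {n : ℕ} (F : Set (Sym2 (Fin n))) (c : ℕ) : Prop :=
  ∀ t : Fin n, (CutAt F t).ncard ≤ c

/-- for every `p ≥ 0` there is an ordered graph on `2^p + 1` vertices,
ordered along a Hamiltonian path, whose edge set is non-crossing, with no induced path
of size `2p + 3`. -/
def dadj (a b : ℕ) : Prop := ∃ k : ℕ, 2 ^ k ∣ min a b ∧ max a b = min a b + 2 ^ k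

lemma dadj_comm {a b : ℕ} : dadj a b ↔ dadj b a := by
  unfold dadj; rw [min_comm, max_comm]

lemma dadj_irrefl (a : ℕ) : ¬ dadj a a := by
  rintro ⟨k, -, h⟩
  have := pow_pos (show (0:ℕ) < 2 by norm_num) k
  omega

lemma dadj_of_lt {a b : ℕ} (h : a < b) : dadj a b ↔ ∃ k, 2 ^ k ∣ a ∧ b = a + 2 ^ k := by
  unfold dadj; rw [min_eq_left h.le, max_eq_right h.le]

lemma gap {k x y : ℕ} (hx : 2 ^ k ∣ x) (hy : 2 ^ k ∣ y) (h : x < y) : x + 2 ^ k ≤ y := by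
  have h1 : 2 ^ k ∣ y - x := Nat.dvd_sub hy hx
  have h2 : 2 ^ k ≤ y - x := Nat.le_of_dvd (by omega) h1
  omega

lemma noncross_nat {a b c d : ℕ} (h1 : a < c) (h2 : c < b) (h3 : b < d)
    (e1 : dadj a b) (e2 : dadj c d) : False := by
  rw [dadj_of_lt (by omega)] at e1 e2
  obtain ⟨k, hka, hb⟩ := e1
  obtain ⟨l, hlc, hd⟩ := e2
  rcases le_total k l with hkl | hkl
  · have hc : 2 ^ k ∣ c := dvd_trans (pow_dvd_pow 2 hkl) hlc
    have := gap hka hc h1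
    omega
  · have hla : 2 ^ l ∣ a := dvd_trans (pow_dvd_pow 2 hkl) hka
    have hlb : 2 ^ l ∣ b := by rw [hb]; exact Nat.dvd_add hla (pow_dvd_pow 2 hkl)
    have := gap hlc hlb h2
    omega

lemma exp_le {k q : ℕ} (h : 2 ^ k ≤ 2 ^ q) : k ≤ q :=
  (pow_le_pow_iff_right₀ (by norm_num)).mp h

/-- only the full interval strictly crosses the midpoint -/
lemma cross_eq {p a b : ℕ} (ha : a < 2 ^ p) (hb1 : 2 ^ p < b) (hb2 : b ≤ 2 ^ (p+1))
    (e : dadj a b) : a = 0 ∧ b = 2 ^ (p+1) := by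
  rw [dadj_of_lt (by omega)] at e
  obtain ⟨k, hka, hb⟩ := e
  have hk : k ≤ p + 1 := exp_le (by omega)
  rcases Nat.lt_or_ge k (p+1) with hk' | hk'
  · exfalso
    have hkp : 2 ^ k ∣ 2 ^ p := pow_dvd_pow 2 (by omega)
    have := gap hka hkp ha
    omega
  · have hk2 : k = p + 1 := by omega
    subst hk2
    have ha0 : a = 0 := by
      rcases Nat.eq_zero_or_pos a with h | h
      · exact h
      · exfalso; have := Nat.le_of_dvd h hka; have : 2 ^ p < 2 ^ (p+1) := by
          exact Nat.pow_lt_pow_right (by norm_num) (by omega)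
        omega
    omega

lemma dadj_translate {q L x y : ℕ} (hL : 2 ^ q ∣ L) (hx : x ≤ 2 ^ q) (hy : y ≤ 2 ^ q) :
    dadj (L + x) (L + y) ↔ dadj x y := by
  unfold dadj
  have hmin : min (L + x) (L + y) = L + min x y := by omega
  have hmax : max (L + x) (L + y) = L + max x y := by omega
  rw [hmin, hmax]
  constructor
  · rintro ⟨k, h1, h2⟩
    have hk : k ≤ q := exp_le (by omega)
    have hkL : 2 ^ k ∣ L := dvd_trans (pow_dvd_pow 2 hk) hL
    exact ⟨k, (Nat.dvd_add_right hkL).mp h1, by omega⟩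
  · rintro ⟨k, h1, h2⟩
    have hk : k ≤ q := exp_le (by omega)
    have hkL : 2 ^ k ∣ L := dvd_trans (pow_dvd_pow 2 hk) hL
    exact ⟨k, Nat.dvd_add hkL h1, by omega⟩

lemma dadj_reflect_aux {q x y : ℕ} (hx : x ≤ 2 ^ q) (hy : y ≤ 2 ^ q) (h : dadj x y) :
    dadj (2 ^ q - x) (2 ^ q - y) := by
  rcases lt_trichotomy x y with hxy | hxy | hxy
  · rw [dadj_of_lt hxy] at h
    obtain ⟨k, h1, h2⟩ := h
    have hk : k ≤ q := exp_le (by omega)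
    have hkq : 2 ^ k ∣ 2 ^ q := pow_dvd_pow 2 hk
    rw [dadj_comm, dadj_of_lt (by omega)]
    exact ⟨k, Nat.dvd_sub hkq (by rw [h2]; exact Nat.dvd_add h1 dvd_rfl), by omega⟩
  · exact absurd h (hxy ▸ dadj_irrefl x)
  · rw [dadj_comm, dadj_of_lt hxy] at h
    obtain ⟨k, h1, h2⟩ := h
    have hk : k ≤ q := exp_le (by omega)
    have hkq : 2 ^ k ∣ 2 ^ q := pow_dvd_pow 2 hk
    rw [dadj_of_lt (by omega)]
    exact ⟨k, Nat.dvd_sub hkq (by rw [h2]; exact Nat.dvd_add h1 dvd_rfl), by omega⟩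

lemma dadj_reflect {q x y : ℕ} (hx : x ≤ 2 ^ q) (hy : y ≤ 2 ^ q) :
    dadj (2 ^ q - x) (2 ^ q - y) ↔ dadj x y := by
  constructor
  · intro h
    have := dadj_reflect_aux (q := q) (by omega) (by omega) h
    rwa [Nat.sub_sub_self hx, Nat.sub_sub_self hy] at this
  · exact dadj_reflect_aux hx hy

lemma dadj_zero {b : ℕ} : dadj 0 b ↔ ∃ k, b = 2 ^ k := by
  unfold dadj
  rw [Nat.min_comm, Nat.min_zero, Nat.max_comm, Nat.max_zero]
  simp

lemma dadj_succ (a : ℕ) : dadj a (a + 1) := by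
  rw [dadj_of_lt (by omega)]
  exact ⟨0, one_dvd a, by norm_num⟩

lemma dadj_pow {p m : ℕ} (hm : 2 ^ p ∣ m) : dadj m (m + 2 ^ p) := by
  have := pow_pos (show (0:ℕ) < 2 by norm_num) p
  rw [dadj_of_lt (by omega)]
  exact ⟨p, hm, rfl⟩

def IP {s : ℕ} (v : Fin s → ℕ) : Prop :=
  Function.Injective v ∧
    ∀ i j : Fin s, dadj (v i) (v j) ↔ ((i : ℕ) + 1 = (j : ℕ) ∨ (j : ℕ) + 1 = (i : ℕ))

lemma IP_sub {s : ℕ} {v : Fin s → ℕ} (hv : IP v) (a t : ℕ) (h : a + t ≤ s) :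
    IP (fun i : Fin t => v ⟨a + (i : ℕ), by have := i.2; omega⟩) := by
  constructor
  · intro i j hij
    have := hv.1 hij
    have h2 : a + (i : ℕ) = a + (j : ℕ) := congrArg Fin.val this
    exact Fin.ext (by omega)
  · intro i j
    rw [hv.2]
    simp only []
    constructor <;> intro hh <;> omega

lemma IP_reverse {s : ℕ} {v : Fin s → ℕ} (hv : IP v) :
    IP (fun i : Fin s => v ⟨s - 1 - (i : ℕ), by have := i.2; omega⟩) := by
  constructor
  · intro i j hij
    have := congrArg Fin.val (hv.1 hij)
    simp only [] at this
    have hi := i.2; have hj := j.2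
    exact Fin.ext (by omega)
  · intro i j
    rw [hv.2]
    have hi := i.2; have hj := j.2
    simp only []
    constructor <;> intro hh <;> omega

lemma IP_transfer {s : ℕ} {v w : Fin s → ℕ} (hv : IP v)
    (hinj : ∀ i j, w i = w j → v i = v j)
    (hadj : ∀ i j, dadj (w i) (w j) ↔ dadj (v i) (v j)) : IP w := by
  exact ⟨fun i j h => hv.1 (hinj i j h), fun i j => (hadj i j).trans (hv.2 i j)⟩

/-- translate down by a multiple of 2^q -/
lemma IP_translate {s q L : ℕ} {v : Fin s → ℕ} (hv : IP v) (hL : 2 ^ q ∣ L)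
    (hlo : ∀ i, L ≤ v i) (hhi : ∀ i, v i ≤ L + 2 ^ q) :
    IP (fun i => v i - L) := by
  apply IP_transfer hv
  · intro i j h; have := hlo i; have := hlo j; omega
  · intro i j
    have e1 : v i = L + (v i - L) := by have := hlo i; omega
    have e2 : v j = L + (v j - L) := by have := hlo j; omega
    rw [show dadj (v i) (v j) ↔ dadj (L + (v i - L)) (L + (v j - L)) by rw [← e1, ← e2]]
    rw [dadj_translate hL (by have := hhi i; omega) (by have := hhi j; omega)]

lemma IP_reflect {s q : ℕ} {v : Fin s → ℕ} (hv : IP v) (hhi : ∀ i, v i ≤ 2 ^ q) :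
    IP (fun i => 2 ^ q - v i) := by
  apply IP_transfer hv
  · intro i j h; have := hhi i; have := hhi j; omega
  · intro i j
    exact dadj_reflect (hhi i) (hhi j)

lemma small_case {s : ℕ} {v : Fin s → ℕ} (hinj : Function.Injective v)
    (hle : ∀ i, v i ≤ 1) : s ≤ 2 := by
  by_contra h
  push_neg at h
  have h0 : (⟨0, by omega⟩ : Fin s) ≠ ⟨1, by omega⟩ := by simp
  have h1 : (⟨1, by omega⟩ : Fin s) ≠ ⟨2, by omega⟩ := by simp
  have h2 : (⟨0, by omega⟩ : Fin s) ≠ ⟨2, by omega⟩ := by simp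
  have n0 := hinj.ne h0
  have n1 := hinj.ne h1
  have n2 := hinj.ne h2
  have := hle ⟨0, by omega⟩; have := hle ⟨1, by omega⟩; have := hle ⟨2, by omega⟩
  omega

lemma two_pow_pos (p : ℕ) : 0 < 2 ^ p := pow_pos (by norm_num) p

lemma two_pow_succ (p : ℕ) : 2 ^ (p+1) = 2 ^ p + 2 ^ p := by ring

/-- once strictly right of the midpoint, the path stays there (if it avoids the midpoint
and starts at 0) -/
lemma stay {p s : ℕ} {v : Fin s → ℕ} (hv : IP v) (hle : ∀ i, v i ≤ 2 ^ (p+1))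
    (hs : 0 < s) (h0 : v ⟨0, hs⟩ = 0) (n : ℕ) (h1 : n < s) (h2 : n + 1 < s)
    (hgt : 2 ^ p < v ⟨n, h1⟩) (hne : v ⟨n+1, h2⟩ ≠ 2 ^ p) :
    2 ^ p < v ⟨n+1, h2⟩ := by
  by_contra hlt
  push_neg at hlt
  have hlt' : v ⟨n+1, h2⟩ < 2 ^ p := lt_of_le_of_ne hlt hne
  have hadj : dadj (v ⟨n, h1⟩) (v ⟨n+1, h2⟩) := (hv.2 _ _).mpr (by left; simp)
  rw [dadj_comm] at hadj
  have hc := cross_eq hlt' hgt (hle _) hadj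
  have : v ⟨n+1, h2⟩ = v ⟨0, hs⟩ := by rw [h0]; exact hc.1
  have := congrArg Fin.val (hv.1 this)
  simp at this

lemma exists_min {P : ℕ → Prop} (h : ∃ n, P n) : ∃ n, P n ∧ ∀ k, k < n → ¬ P k := by
  classical
  exact ⟨Nat.find h, Nat.find_spec h, fun k hk => Nat.find_min h hk⟩

lemma lemA : ∀ p s : ℕ, ∀ v : Fin s → ℕ, IP v → (∀ i, v i ≤ 2 ^ p) →
    ∀ hs : 0 < s, v ⟨0, hs⟩ = 0 → s ≤ p + 2 := by
  intro p
  induction p with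
  | zero =>
    intro s v hv hle hs h0
    exact le_trans (small_case hv.1 (by simpa using hle)) (by omega)
  | succ p ih =>
    intro s v hv hle hs h0
    by_cases hall : ∀ i, v i ≤ 2 ^ p
    · exact le_trans (ih s v hv hall hs h0) (by omega)
    push_neg at hall
    obtain ⟨i0, hi0⟩ := hall
    have hpow := two_pow_pos p
    have hpow2 : 2 ^ (p+1) = 2 ^ p + 2 ^ p := two_pow_succ p
    have hs2 : 2 ≤ s := by
      by_contra h
      push_neg at h
      have hi : i0 = ⟨0, hs⟩ := Fin.ext (by have := i0.2; omega)
      rw [hi, h0] at hi0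
      omega
    have hadj01 : dadj (v ⟨0, hs⟩) (v ⟨1, by omega⟩) := (hv.2 _ _).mpr (by left; rfl)
    rw [h0, dadj_zero] at hadj01
    obtain ⟨k, hk⟩ := hadj01
    by_cases hb : v ⟨1, by omega⟩ = 2 ^ (p+1)
    · -- second vertex is the right endpoint 2^(p+1)
      have hm_not : ∀ j : Fin s, v j ≠ 2 ^ p := by
        intro j hj
        have hd : dadj (v ⟨0, hs⟩) (v j) := by
          rw [h0, hj, dadj_zero]; exact ⟨p, rfl⟩
        have hidx := (hv.2 _ j).mp hd
        have e0 : ((⟨0, hs⟩ : Fin s) : ℕ) = 0 := rfl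
        have hj1 : j = (⟨1, by omega⟩ : Fin s) := by
          apply Fin.ext
          show (j : ℕ) = 1
          omega
        rw [hj1, hb] at hj
        omega
      have hgt : ∀ n, ∀ h1 : n < s, 0 < n → 2 ^ p < v ⟨n, h1⟩ := by
        intro n
        induction n with
        | zero => omega
        | succ n ihn =>
          intro h1 _
          rcases Nat.eq_zero_or_pos n with rfl | hn
          · rw [show (⟨0+1, h1⟩ : Fin s) = ⟨1, by omega⟩ from Fin.ext rfl, hb]; omega
          · exact stay hv hle hs h0 n (by omega) h1 (ihn (by omega) hn) (hm_not _)
      have hsub := IP_sub hv 1 (s-1) (by omega)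
      have hw := IP_reflect (q := p+1) hsub (fun i => hle _)
      have hres := ih (s-1) _ hw (fun i => by
          have h1 := hgt (1 + (i : ℕ)) (by have := i.2; omega) (by omega)
          have h2 := hle ⟨1 + (i : ℕ), by have := i.2; omega⟩
          show 2 ^ (p+1) - v ⟨1 + (i : ℕ), _⟩ ≤ 2 ^ p
          omega)
        (by omega)
        (by
          show 2 ^ (p+1) - v ⟨1 + ((⟨0, by omega⟩ : Fin (s-1)) : ℕ), _⟩ = 0
          have e1 : (⟨1 + ((⟨0, by omega⟩ : Fin (s-1)) : ℕ), by omega⟩ : Fin s)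
              = ⟨1, by omega⟩ := Fin.ext rfl
          rw [e1, hb]
          omega)
      omega
    · -- second vertex is ≤ 2^p : path must pass through the midpoint at index 1
      have hM_not : ∀ j : Fin s, v j ≠ 2 ^ (p+1) := by
        intro j hj
        have hd : dadj (v ⟨0, hs⟩) (v j) := by
          rw [h0, hj, dadj_zero]; exact ⟨p+1, rfl⟩
        have hidx := (hv.2 _ j).mp hd
        have e0 : ((⟨0, hs⟩ : Fin s) : ℕ) = 0 := rfl
        have hj1 : j = (⟨1, by omega⟩ : Fin s) := by
          apply Fin.ext
          show (j : ℕ) = 1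
          omega
        rw [hj1] at hj
        exact hb hj
      have hex : ∃ n : ℕ, ∃ h : n < s, 2 ^ p < v ⟨n, h⟩ :=
        ⟨(i0 : ℕ), i0.2, by rw [Fin.eta]; exact hi0⟩
      obtain ⟨n0, ⟨hn0lt, hn0gt⟩, hmin'⟩ := exists_min hex
      have hminF : ∀ j : Fin s, (j : ℕ) < n0 → v j ≤ 2 ^ p := by
        intro j hj
        have h2 := hmin' (j : ℕ) hj
        push_neg at h2
        have h3 := h2 j.2
        rwa [Fin.eta] at h3
      obtain ⟨cur, hcurv⟩ : ∃ j : Fin s, (j : ℕ) = n0 := ⟨⟨n0, hn0lt⟩, rfl⟩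
      have hcurgt : 2 ^ p < v cur := by
        have hz : cur = ⟨n0, hn0lt⟩ := Fin.ext hcurv
        rw [hz]; exact hn0gt
      have hn0pos : 0 < n0 := by
        rcases Nat.eq_zero_or_pos n0 with h | h
        · exfalso
          have hz : cur = ⟨0, hs⟩ := Fin.ext (by show (cur : ℕ) = 0; omega)
          rw [hz, h0] at hcurgt
          omega
        · exact h
      obtain ⟨prev, hprevv⟩ : ∃ j : Fin s, (j : ℕ) = n0 - 1 := ⟨⟨n0 - 1, by omega⟩, rfl⟩
      have hprevle : v prev ≤ 2 ^ p := hminF prev (by omega)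
      have hadjprev : dadj (v prev) (v cur) := (hv.2 _ _).mpr (by left; omega)
      have hprev : v prev = 2 ^ p := by
        by_contra hne
        have hlt : v prev < 2 ^ p := lt_of_le_of_ne hprevle hne
        have hc := cross_eq hlt hcurgt (hle _) hadjprev
        exact hM_not _ hc.2
      have hprevv1 : (prev : ℕ) = 1 := by
        have hd : dadj (v ⟨0, hs⟩) (v prev) := by
          rw [h0, hprev, dadj_zero]; exact ⟨p, rfl⟩
        have hidx := (hv.2 _ _).mp hd
        have e0 : ((⟨0, hs⟩ : Fin s) : ℕ) = 0 := rfl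
        rcases hidx with h | h
        · omega
        · exfalso
          have hz : prev = ⟨0, hs⟩ := Fin.ext (by show (prev : ℕ) = 0; omega)
          rw [hz, h0] at hprev
          omega
      have hn02 : n0 = 2 := by omega
      have hgt2 : ∀ n, ∀ h1 : n < s, 2 ≤ n → 2 ^ p < v ⟨n, h1⟩ := by
        intro n
        induction n with
        | zero => omega
        | succ n ihn =>
          intro h1 hn2
          rcases Nat.lt_or_ge n 2 with hn | hn
          · have hz : (⟨n+1, h1⟩ : Fin s) = cur := Fin.ext (by show n + 1 = (cur : ℕ); omega)
            rw [hz]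
            exact hcurgt
          · refine stay hv hle hs h0 n (by omega) h1 (ihn (by omega) hn) ?_
            intro heq
            have hz : (⟨n+1, h1⟩ : Fin s) = prev := hv.1 (by rw [heq, hprev])
            have hz2 := congrArg Fin.val hz
            have e1 : ((⟨n+1, h1⟩ : Fin s) : ℕ) = n + 1 := rfl
            omega
      have hsub := IP_sub hv 1 (s-1) (by omega)
      have hlo : ∀ i : Fin (s-1), 2 ^ p ≤ v ⟨1 + (i : ℕ), by have := i.2; omega⟩ := by
        intro i
        rcases Nat.eq_zero_or_pos (i : ℕ) with h | h
        · have hz : (⟨1 + (i : ℕ), by have := i.2; omega⟩ : Fin s) = prev :=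
            Fin.ext (by show 1 + (i : ℕ) = (prev : ℕ); omega)
          rw [hz, hprev]
        · exact le_of_lt (hgt2 (1 + (i : ℕ)) (by have := i.2; omega) (by omega))
      have hw := IP_translate (q := p) (L := 2 ^ p) hsub dvd_rfl
        (fun i => hlo i) (fun i => by have := hle ⟨1 + (i : ℕ), by have := i.2; omega⟩; omega)
      have hres := ih (s-1) _ hw
        (fun i => by
          have := hle ⟨1 + (i : ℕ), by have := i.2; omega⟩
          show v ⟨1 + (i : ℕ), _⟩ - 2 ^ p ≤ 2 ^ p
          omega)
        (by omega)
        (by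
          show v ⟨1 + ((⟨0, by omega⟩ : Fin (s-1)) : ℕ), _⟩ - 2 ^ p = 0
          have hz : (⟨1 + ((⟨0, by omega⟩ : Fin (s-1)) : ℕ), by omega⟩ : Fin s) = prev :=
            Fin.ext (by show 1 + 0 = (prev : ℕ); omega)
          rw [hz, hprev]
          omega)
      omega

lemma iff_chain {Q : ℕ → Prop} (i j : ℕ) (hij : i ≤ j)
    (h : ∀ n, i ≤ n → n < j → (Q n ↔ Q (n+1))) : Q i ↔ Q j := by
  induction j, hij using Nat.le_induction with
  | base => exact Iff.rfl
  | succ j hj ihj =>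
    exact (ihj (fun n hn1 hn2 => h n hn1 (by omega))).trans (h j hj (by omega))

/-- split at an occurrence of the midpoint -/
lemma auxM (p s a : ℕ) (ha : a < s) (v : Fin s → ℕ) (hv : IP v)
    (hle : ∀ i, v i ≤ 2 ^ (p+1)) (hm : v ⟨a, ha⟩ = 2 ^ p)
    (hpre : ∀ j : Fin s, (j : ℕ) ≤ a → v j ≤ 2 ^ p)
    (hpost : ∀ j : Fin s, a ≤ (j : ℕ) → 2 ^ p ≤ v j) : s ≤ 2 * p + 4 := by
  have hpow := two_pow_pos p
  have hpow2 : 2 ^ (p+1) = 2 ^ p + 2 ^ p := two_pow_succ p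
  have hmz : ∀ j : Fin s, (j : ℕ) = a → 2 ^ p - v j = 0 := by
    intro j hj
    rw [show j = ⟨a, ha⟩ from Fin.ext hj, hm]
    omega
  have hmz2 : ∀ j : Fin s, (j : ℕ) = a → v j - 2 ^ p = 0 := by
    intro j hj
    rw [show j = ⟨a, ha⟩ from Fin.ext hj, hm]
    omega
  have hle2 : ∀ j : Fin s, v j - 2 ^ p ≤ 2 ^ p := fun j => by have := hle j; omega
  have hle3 : ∀ j : Fin s, v j ≤ 2 ^ p + 2 ^ p := fun j => by have := hle j; omega
  have hsub1 := IP_sub hv 0 (a+1) (by omega)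
  have hrev1 := IP_reverse hsub1
  have hrefl1 := IP_reflect (q := p) hrev1
    (fun i => hpre _ (by show 0 + (a + 1 - 1 - (i : ℕ)) ≤ a; omega))
  have h1 := lemA p (a+1) _ hrefl1
    (fun i => Nat.sub_le _ _)
    (by omega)
    (hmz _ (by show 0 + (a + 1 - 1 - 0) = a; omega))
  have hsub2 := IP_sub hv a (s - a) (by omega)
  have htr := IP_translate (q := p) (L := 2 ^ p) hsub2 dvd_rfl
    (fun i => hpost _ (Nat.le_add_right a (i : ℕ)))
    (fun i => hle3 _)
  have h2 := lemA p (s - a) _ htr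
    (fun i => hle2 _)
    (by omega)
    (hmz2 _ (by show a + 0 = a; omega))
  omega

/-- split at the long edge 0 -- 2^(p+1) -/
lemma auxE (p s q : ℕ) (hq : q + 1 < s) (v : Fin s → ℕ) (hv : IP v)
    (hle : ∀ i, v i ≤ 2 ^ (p+1)) (h0 : v ⟨q, by omega⟩ = 0) (hM : v ⟨q+1, hq⟩ = 2 ^ (p+1))
    (hpre : ∀ j : Fin s, (j : ℕ) ≤ q → v j ≤ 2 ^ p)
    (hpost : ∀ j : Fin s, q + 1 ≤ (j : ℕ) → 2 ^ p ≤ v j) : s ≤ 2 * p + 4 := by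
  have hpow := two_pow_pos p
  have hpow2 : 2 ^ (p+1) = 2 ^ p + 2 ^ p := two_pow_succ p
  have h0z : ∀ j : Fin s, (j : ℕ) = q → v j = 0 := by
    intro j hj
    rw [show j = ⟨q, by omega⟩ from Fin.ext hj]
    exact h0
  have hMz : ∀ j : Fin s, (j : ℕ) = q + 1 → 2 ^ p - (v j - 2 ^ p) = 0 := by
    intro j hj
    rw [show j = ⟨q+1, hq⟩ from Fin.ext hj, hM]
    omega
  have hle2 : ∀ j : Fin s, v j - 2 ^ p ≤ 2 ^ p := fun j => by have := hle j; omega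
  have hle3 : ∀ j : Fin s, v j ≤ 2 ^ p + 2 ^ p := fun j => by have := hle j; omega
  have hsub1 := IP_sub hv 0 (q+1) (by omega)
  have hrev1 := IP_reverse hsub1
  have h1 := lemA p (q+1) _ hrev1
    (fun i => hpre _ (by show 0 + (q + 1 - 1 - (i : ℕ)) ≤ q; omega))
    (by omega)
    (h0z _ (by show 0 + (q + 1 - 1 - 0) = q; omega))
  have hsub2 := IP_sub hv (q+1) (s - (q+1)) (by omega)
  have htr := IP_translate (q := p) (L := 2 ^ p) hsub2 dvd_rfl
    (fun i => hpost _ (Nat.le_add_right (q+1) (i : ℕ)))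
    (fun i => hle3 _)
  have hrefl2 := IP_reflect (q := p) htr (fun i => hle2 _)
  have h2 := lemA p (s - (q+1)) _ hrefl2
    (fun i => Nat.sub_le _ _)
    (by omega)
    (hMz _ (by show q + 1 + 0 = q + 1; omega))
  omega

lemma side_step {p s : ℕ} {v : Fin s → ℕ} (hv : IP v) (hle : ∀ i, v i ≤ 2 ^ (p+1))
    (n : ℕ) (h1 : n < s) (h2 : n + 1 < s)
    (hne1 : v ⟨n, h1⟩ ≠ 2 ^ p) (hne2 : v ⟨n+1, h2⟩ ≠ 2 ^ p)
    (hnot : ¬ (v ⟨n, h1⟩ ≤ 2 ^ p ↔ v ⟨n+1, h2⟩ ≤ 2 ^ p)) :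
    (v ⟨n, h1⟩ = 0 ∧ v ⟨n+1, h2⟩ = 2 ^ (p+1)) ∨
      (v ⟨n, h1⟩ = 2 ^ (p+1) ∧ v ⟨n+1, h2⟩ = 0) := by
  have hadj : dadj (v ⟨n, h1⟩) (v ⟨n+1, h2⟩) := (hv.2 _ _).mpr (by left; show n + 1 = n + 1; rfl)
  rcases Nat.lt_or_ge (v ⟨n, h1⟩) (2 ^ p) with hx | hx
  · have hy : 2 ^ p < v ⟨n+1, h2⟩ := by omega
    exact Or.inl (cross_eq hx hy (hle _) hadj)
  · have hx' : 2 ^ p < v ⟨n, h1⟩ := by omega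
    have hy : v ⟨n+1, h2⟩ < 2 ^ p := by omega
    rw [dadj_comm] at hadj
    have := cross_eq hy hx' (hle _) hadj
    exact Or.inr ⟨this.2, this.1⟩

lemma chain_side {s m : ℕ} {v : Fin s → ℕ} {C : ℕ → Prop}
    (hstep : ∀ n, ∀ h1 : n < s, ∀ h2 : n + 1 < s, C n →
      (v ⟨n, h1⟩ ≤ m ↔ v ⟨n+1, h2⟩ ≤ m))
    (x y : Fin s) (hxy : (x : ℕ) ≤ (y : ℕ))
    (hcond : ∀ n, (x : ℕ) ≤ n → n < (y : ℕ) → C n) :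
    (v x ≤ m ↔ v y ≤ m) := by
  have h := iff_chain (Q := fun n => ∀ h : n < s, v ⟨n, h⟩ ≤ m) (x : ℕ) (y : ℕ) hxy
    (fun n hn1 hn2 => by
      have hns : n + 1 < s := by have := y.2; omega
      constructor
      · intro hq h; exact (hstep n (by omega) h (hcond n hn1 hn2)).mp (hq (by omega))
      · intro hq h; exact (hstep n h hns (hcond n hn1 hn2)).mpr (hq hns))
  constructor
  · intro hx
    have h2 := h.mp (fun hh => by rw [Fin.eta]; exact hx) y.2
    rwa [Fin.eta] at h2
  · intro hy
    have h2 := h.mpr (fun hh => by rw [Fin.eta]; exact hy) x.2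
    rwa [Fin.eta] at h2

lemma lemC : ∀ p s : ℕ, ∀ v : Fin s → ℕ, IP v → (∀ i, v i ≤ 2 ^ p) → s ≤ 2 * p + 2 := by
  intro p
  induction p with
  | zero =>
    intro s v hv hle
    exact le_trans (small_case hv.1 (by simpa using hle)) (by omega)
  | succ p ih =>
    intro s v hv hle
    have hpow := two_pow_pos p
    have hpow2 : 2 ^ (p+1) = 2 ^ p + 2 ^ p := two_pow_succ p
    by_cases hLall : ∀ i, v i ≤ 2 ^ p
    · exact le_trans (ih s v hv hLall) (by omega)
    push_neg at hLall
    obtain ⟨iR, hiR⟩ := hLall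
    by_cases hRall : ∀ i, 2 ^ p ≤ v i
    · have hw := IP_translate (q := p) (L := 2 ^ p) hv dvd_rfl hRall
        (fun i => by have := hle i; omega)
      have := ih s _ hw (fun i => by have := hle i; omega)
      omega
    push_neg at hRall
    obtain ⟨iL, hiL⟩ := hRall
    by_cases hmem : ∃ a : Fin s, v a = 2 ^ p
    · obtain ⟨a, hma⟩ := hmem
      have ha2 := a.2
      have h0M : ¬ ((∃ b : Fin s, v b = 0) ∧ ∃ c : Fin s, v c = 2 ^ (p+1)) := by
        rintro ⟨⟨b, hb⟩, ⟨c, hc⟩⟩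
        have dab : dadj (v a) (v b) := by
          rw [hma, hb, dadj_comm, dadj_zero]; exact ⟨p, rfl⟩
        have dac : dadj (v a) (v c) := by
          rw [hma, hc, hpow2]; exact dadj_pow dvd_rfl
        have dbc : dadj (v b) (v c) := by
          rw [hb, hc, dadj_zero]; exact ⟨p+1, rfl⟩
        have i1 := (hv.2 a b).mp dab
        have i2 := (hv.2 a c).mp dac
        have i3 := (hv.2 b c).mp dbc
        rcases i1 with h|h <;> rcases i2 with h2|h2 <;> rcases i3 with h3|h3 <;> omega
      have hstep : ∀ n, ∀ h1 : n < s, ∀ h2 : n + 1 < s, (n ≠ (a:ℕ) ∧ n + 1 ≠ (a:ℕ)) →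
          (v ⟨n, h1⟩ ≤ 2 ^ p ↔ v ⟨n+1, h2⟩ ≤ 2 ^ p) := by
        intro n h1 h2 hc
        by_contra hnot
        have hne1 : v ⟨n, h1⟩ ≠ 2 ^ p := by
          intro h; exact hc.1 (congrArg Fin.val (hv.1 (h.trans hma.symm)))
        have hne2 : v ⟨n+1, h2⟩ ≠ 2 ^ p := by
          intro h; exact hc.2 (congrArg Fin.val (hv.1 (h.trans hma.symm)))
        rcases side_step hv hle n h1 h2 hne1 hne2 hnot with ⟨hx, hy⟩ | ⟨hx, hy⟩
        · exact h0M ⟨⟨_, hx⟩, ⟨_, hy⟩⟩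
        · exact h0M ⟨⟨_, hy⟩, ⟨_, hx⟩⟩
      have hchain := chain_side (m := 2 ^ p) hstep
      have haR : (iR : ℕ) ≠ (a : ℕ) := by
        intro h; rw [show iR = a from Fin.ext h, hma] at hiR; omega
      have haL : (iL : ℕ) ≠ (a : ℕ) := by
        intro h; rw [show iL = a from Fin.ext h, hma] at hiL; omega
      have hmaz : ∀ j : Fin s, (j : ℕ) = (a : ℕ) → v j = 2 ^ p := by
        intro j hj; rw [show j = a from Fin.ext hj]; exact hma
      rcases Nat.lt_or_ge (iL : ℕ) (a : ℕ) with hLa | hLa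
      · -- iL left of a, so iR right of a
        have hRa : (a : ℕ) < (iR : ℕ) := by
          rcases Nat.lt_or_ge (a:ℕ) (iR:ℕ) with h | h
          · exact h
          · exfalso
            rcases Nat.le_total (iL:ℕ) (iR:ℕ) with h2 | h2
            · have hcc := (hchain iL iR h2 (fun n hn1 hn2 => by omega)).mp (le_of_lt hiL)
              omega
            · have hcc := (hchain iR iL h2 (fun n hn1 hn2 => by omega)).mpr (le_of_lt hiL)
              omega
        have hpre : ∀ j : Fin s, (j : ℕ) ≤ (a:ℕ) → v j ≤ 2 ^ p := by
          intro j hj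
          rcases Nat.eq_or_lt_of_le hj with h | h
          · rw [hmaz j h]
          · rcases Nat.le_total (j:ℕ) (iL:ℕ) with h2 | h2
            · exact (hchain j iL h2 (fun n hn1 hn2 => by omega)).mpr (le_of_lt hiL)
            · exact (hchain iL j h2 (fun n hn1 hn2 => by omega)).mp (le_of_lt hiL)
        have hpost : ∀ j : Fin s, (a:ℕ) ≤ (j:ℕ) → 2 ^ p ≤ v j := by
          intro j hj
          rcases Nat.eq_or_lt_of_le hj with h | h
          · rw [hmaz j h.symm]
          · by_contra hcon
            push_neg at hcon
            rcases Nat.le_total (j:ℕ) (iR:ℕ) with h2 | h2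
            · have hcc := (hchain j iR h2 (fun n hn1 hn2 => by omega)).mp (le_of_lt hcon)
              omega
            · have hcc := (hchain iR j h2 (fun n hn1 hn2 => by omega)).mpr (le_of_lt hcon)
              omega
        have := auxM p s (a:ℕ) a.2 v hv hle (by rw [Fin.eta]; exact hma) hpre hpost
        omega
      · -- a left of iL : mirror case, reverse the path
        have haL' : (a : ℕ) < (iL : ℕ) := by omega
        have hRa : (iR : ℕ) < (a : ℕ) := by
          rcases Nat.lt_or_ge (iR:ℕ) (a:ℕ) with h | h
          · exact h
          · exfalso
            have h' : (a:ℕ) < (iR:ℕ) := by omega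
            rcases Nat.le_total (iL:ℕ) (iR:ℕ) with h2 | h2
            · have hcc := (hchain iL iR h2 (fun n hn1 hn2 => by omega)).mp (le_of_lt hiL)
              omega
            · have hcc := (hchain iR iL h2 (fun n hn1 hn2 => by omega)).mpr (le_of_lt hiL)
              omega
        have hpre' : ∀ j : Fin s, (j : ℕ) ≤ (a:ℕ) → 2 ^ p ≤ v j := by
          intro j hj
          rcases Nat.eq_or_lt_of_le hj with h | h
          · rw [hmaz j h]
          · by_contra hcon
            push_neg at hcon
            rcases Nat.le_total (j:ℕ) (iR:ℕ) with h2 | h2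
            · have hcc := (hchain j iR h2 (fun n hn1 hn2 => by omega)).mp (le_of_lt hcon)
              omega
            · have hcc := (hchain iR j h2 (fun n hn1 hn2 => by omega)).mpr (le_of_lt hcon)
              omega
        have hpost' : ∀ j : Fin s, (a:ℕ) ≤ (j:ℕ) → v j ≤ 2 ^ p := by
          intro j hj
          rcases Nat.eq_or_lt_of_le hj with h | h
          · rw [hmaz j h.symm]
          · rcases Nat.le_total (j:ℕ) (iL:ℕ) with h2 | h2
            · exact (hchain j iL h2 (fun n hn1 hn2 => by omega)).mpr (le_of_lt hiL)
            · exact (hchain iL j h2 (fun n hn1 hn2 => by omega)).mp (le_of_lt hiL)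
        have hvr := IP_reverse hv
        have := auxM p s (s - 1 - (a:ℕ)) (by omega) _ hvr
          (fun i => hle _)
          (hmaz _ (by show s - 1 - (s - 1 - (a:ℕ)) = (a:ℕ); omega))
          (fun j hj => hpost' _ (by show (a:ℕ) ≤ s - 1 - (j:ℕ); have := j.2; omega))
          (fun j hj => hpre' _ (by show s - 1 - (j:ℕ) ≤ (a:ℕ); have := j.2; omega))
        omega
    · -- the midpoint value never occurs
      push_neg at hmem
      have hstep2 : ∀ n, ∀ h1 : n < s, ∀ h2 : n+1 < s,
          ¬(v ⟨n,h1⟩ ≤ 2^p ↔ v ⟨n+1,h2⟩ ≤ 2^p) →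
          (v ⟨n,h1⟩ = 0 ∧ v ⟨n+1,h2⟩ = 2^(p+1)) ∨
            (v ⟨n,h1⟩ = 2^(p+1) ∧ v ⟨n+1,h2⟩ = 0) :=
        fun n h1 h2 hnot => side_step hv hle n h1 h2 (hmem _) (hmem _) hnot
      have hex : ∃ n, ∃ h1 : n < s, ∃ h2 : n + 1 < s,
          ¬(v ⟨n,h1⟩ ≤ 2^p ↔ v ⟨n+1,h2⟩ ≤ 2^p) := by
        by_contra hc
        push_neg at hc
        have hchain := chain_side (m := 2 ^ p) (C := fun _ => True)
          (fun n h1 h2 _ => hc n h1 h2)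
        rcases Nat.le_total (iL:ℕ) (iR:ℕ) with h2 | h2
        · have hcc := (hchain iL iR h2 (fun n hn1 hn2 => trivial)).mp (le_of_lt hiL)
          omega
        · have hcc := (hchain iR iL h2 (fun n hn1 hn2 => trivial)).mpr (le_of_lt hiL)
          omega
      obtain ⟨n, h1, h2, hnot⟩ := hex
      have huniq : ∀ n', ∀ h1' : n' < s, ∀ h2' : n'+1 < s, n' ≠ n →
          (v ⟨n',h1'⟩ ≤ 2^p ↔ v ⟨n'+1,h2'⟩ ≤ 2^p) := by
        intro n' h1' h2' hne
        by_contra hnot'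
        rcases hstep2 n h1 h2 hnot with ⟨hx, hy⟩ | ⟨hx, hy⟩ <;>
          rcases hstep2 n' h1' h2' hnot' with ⟨hx', hy'⟩ | ⟨hx', hy'⟩
        · exact hne (congrArg Fin.val (hv.1 (hx'.trans hx.symm)))
        · have e1 : n' = n + 1 := congrArg Fin.val (hv.1 (hx'.trans hy.symm))
          have e2 : n' + 1 = n := congrArg Fin.val (hv.1 (hy'.trans hx.symm))
          omega
        · have e1 : n' = n + 1 := congrArg Fin.val (hv.1 (hx'.trans hy.symm))
          have e2 : n' + 1 = n := congrArg Fin.val (hv.1 (hy'.trans hx.symm))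
          omega
        · exact hne (congrArg Fin.val (hv.1 (hx'.trans hx.symm)))
      have hchain := chain_side (m := 2 ^ p) (C := fun n' => n' ≠ n)
        (fun n' h1' h2' hc => huniq n' h1' h2' hc)
      rcases hstep2 n h1 h2 hnot with ⟨hx, hy⟩ | ⟨hx, hy⟩
      · -- v n = 0, v (n+1) = 2^(p+1)
        have hpre : ∀ j : Fin s, (j:ℕ) ≤ n → v j ≤ 2 ^ p := by
          intro j hj
          have hcc := (hchain j ⟨n, h1⟩ hj (fun n'' hn1 hn2 => by
            have e : ((⟨n, h1⟩ : Fin s) : ℕ) = n := rfl; omega)).mpr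
            (by rw [hx]; omega)
          exact hcc
        have hpost : ∀ j : Fin s, n + 1 ≤ (j:ℕ) → 2 ^ p ≤ v j := by
          intro j hj
          by_contra hcon
          push_neg at hcon
          have hcc := (hchain ⟨n+1, h2⟩ j hj (fun n'' hn1 hn2 => by
            have e : ((⟨n+1, h2⟩ : Fin s) : ℕ) = n + 1 := rfl; omega)).mpr
            (le_of_lt hcon)
          rw [hy] at hcc
          omega
        have := auxE p s n h2 v hv hle hx hy hpre hpost
        omega
      · -- v n = 2^(p+1), v (n+1) = 0 : reverse the path
        have hsuf : ∀ j : Fin s, n + 1 ≤ (j:ℕ) → v j ≤ 2 ^ p := by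
          intro j hj
          have hcc := (hchain ⟨n+1, h2⟩ j hj (fun n'' hn1 hn2 => by
            have e : ((⟨n+1, h2⟩ : Fin s) : ℕ) = n + 1 := rfl; omega)).mp
            (by rw [hy]; omega)
          exact hcc
        have hprefix : ∀ j : Fin s, (j:ℕ) ≤ n → 2 ^ p ≤ v j := by
          intro j hj
          by_contra hcon
          push_neg at hcon
          have hcc := (hchain j ⟨n, h1⟩ hj (fun n'' hn1 hn2 => by
            have e : ((⟨n, h1⟩ : Fin s) : ℕ) = n := rfl; omega)).mp
            (le_of_lt hcon)
          rw [hx] at hcc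
          omega
        have h0g : ∀ j : Fin s, (j:ℕ) = n + 1 → v j = 0 := by
          intro j hj; rw [show j = ⟨n+1, h2⟩ from Fin.ext hj]; exact hy
        have hMg : ∀ j : Fin s, (j:ℕ) = n → v j = 2 ^ (p+1) := by
          intro j hj; rw [show j = ⟨n, h1⟩ from Fin.ext hj]; exact hx
        have hvr := IP_reverse hv
        have := auxE p s (s - n - 2) (by omega) _ hvr
          (fun i => hle _)
          (h0g _ (by show s - 1 - (s - n - 2) = n + 1; omega))
          (hMg _ (by show s - 1 - (s - n - 2 + 1) = n; omega))
          (fun j hj => hsuf _ (by show n + 1 ≤ s - 1 - (j:ℕ); have := j.2; omega))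
          (fun j hj => hprefix _ (by show s - 1 - (j:ℕ) ≤ n; have := j.2; omega))
        omega

theorem stmt11 (p : ℕ) :
    ∃ G : SimpleGraph (Fin (2 ^ p + 1)),
      OrderedAlongHamPath G ∧ NonCrossing G.edgeSet ∧
      ¬ ∃ w : Fin (2 * p + 3) → Fin (2 ^ p + 1), IsInducedPath G w := by
  refine ⟨⟨fun a b => dadj (a : ℕ) (b : ℕ), ⟨fun a b h => dadj_comm.mp h⟩,
    ⟨fun a h => dadj_irrefl _ h⟩⟩, ?_, ?_, ?_⟩
  · intro i h
    exact dadj_succ _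
  · rintro ⟨a, b, c, d, h1, h2, h3, he1, he2⟩
    rw [SimpleGraph.mem_edgeSet] at he1 he2
    exact noncross_nat (show (a:ℕ) < (c:ℕ) from h1) h2 h3 he1 he2
  · rintro ⟨w, hinj, hadj⟩
    have hIP : IP (fun i => ((w i) : ℕ)) :=
      ⟨fun i j h => hinj (Fin.ext h), fun i j => hadj i j⟩
    have := lemC p (2*p+3) _ hIP (fun i => by have := (w i).2; omega)
    omega
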